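/- Let b be a formal iterated bracket and let S be a subbracket of b. Then the number of differentiations 𝔡(S; b) equals the number of right (closing) brackets occurring in b to the right of S minus the number of left (opening) brackets occurring in b to the right of S. -/

import Mathlib

open MeasureTheory Set Filter Asymptotics Topology
noncomputable section

/-- Formal iterated brackets, built from variables `X j` (`j ∈ ℕ`) and the binary
bracket operation. -/
inductive FormalBracket : Type
  | var : ℕ → FormalBracket
  | br : FormalBracket → FormalBracket → FormalBracket
deriving DecidableEq

namespace FormalBracket

/-- The length of a bracket: the number of variable occurrences. -/
def lengthB : FormalBracket → ℕ
  | var _ => 1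
  | br b₁ b₂ => lengthB b₁ + lengthB b₂

/-- `Seq(b)`: the ordered list of variable indices occurring in `b`. -/
def varsB : FormalBracket → List ℕ
  | var j => [j]
  | br b₁ b₂ => varsB b₁ ++ varsB b₂

/-- `S` is a subbracket of `b` (a substring of `b` which is itself a bracket). -/
def isSub (S : FormalBracket) : FormalBracket → Bool
  | var j => S = var j
  | br b₁ b₂ => S = br b₁ b₂ || isSub S b₁ || isSub S b₂

/-- The number of differentiations `𝔡(S; b)` of a subbracket `S` in `b`, defined by the
backward recursion `𝔡(b; b) = 0`, `𝔡(S₁; b) = 𝔡(S₂; b) = 1 + 𝔡([S₁,S₂]; b)`. -/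
def diffCount (S : FormalBracket) : FormalBracket → ℕ
  | var _ => 0
  | br b₁ b₂ =>
    if S = br b₁ b₂ then 0
    else if isSub S b₁ then 1 + diffCount S b₁
    else 1 + diffCount S b₂

end FormalBracket

/-- The tokens making up the word of a bracket: left parenthesis `[`, right
parenthesis `]`, comma, and variables. -/
inductive Token : Type
  | lb | rb | comma
  | tvar : ℕ → Token
deriving DecidableEq

/-- The word (string of tokens) associated to a formal bracket. -/
def toWord : FormalBracket → List Token
  | .var j => [.tvar j]
  | .br b₁ b₂ => [.lb] ++ toWord b₁ ++ [.comma] ++ toWord b₂ ++ [.rb]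

-- balance lemma
lemma balance (b : FormalBracket) :
    (toWord b).countP (fun t => t = Token.rb) = (toWord b).countP (fun t => t = Token.lb) := by
  induction b with
  | var j => simp [toWord]
  | br b₁ b₂ ih₁ ih₂ => simp [toWord, List.countP_append, ih₁, ih₂]; omega

-- count of tvar j
lemma count_tvar (b : FormalBracket) (j : ℕ) :
    (toWord b).count (Token.tvar j) = (b.varsB).count j := by
  induction b with
  | var i => simp [toWord, FormalBracket.varsB, List.count_singleton]
  | br b₁ b₂ ih₁ ih₂ => simp [toWord, FormalBracket.varsB, List.count_append, ih₁, ih₂, List.count_singleton]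

lemma vars_ne_nil (S : FormalBracket) : S.varsB ≠ [] := by
  induction S with
  | var j => simp [FormalBracket.varsB]
  | br b₁ b₂ ih₁ ih₂ => simp [FormalBracket.varsB]; intro h _; exact ih₁ h

lemma mem_toWord_tvar (b : FormalBracket) (j : ℕ) : Token.tvar j ∈ toWord b ↔ j ∈ b.varsB := by
  induction b with
  | var i => simp [toWord, FormalBracket.varsB]
  | br b₁ b₂ ih₁ ih₂ => simp [toWord, FormalBracket.varsB, ih₁, ih₂]

lemma sub_vars_subset {S b : FormalBracket} (h : S.isSub b = true) : S.varsB ⊆ b.varsB := by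
  induction b with
  | var i =>
    simp [FormalBracket.isSub] at h
    subst h; exact fun x hx => hx
  | br b₁ b₂ ih₁ ih₂ =>
    simp [FormalBracket.isSub] at h
    rcases h with (h | h) | h
    · subst h; exact fun x hx => hx
    · exact fun x hx => by simp [FormalBracket.varsB]; exact Or.inl (ih₁ h hx)
    · exact fun x hx => by simp [FormalBracket.varsB]; exact Or.inr (ih₂ h hx)

-- uniqueness of occurrence
lemma unique_occ {α : Type} [DecidableEq α] {l a a' c c' w : List α} {x : α}
    (hx : x ∈ w) (hcount : l.count x ≤ 1)
    (h1 : l = a ++ w ++ c) (h2 : l = a' ++ w ++ c') : a = a' ∧ c = c' := by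
  obtain ⟨u, v, rfl⟩ := List.append_of_mem hx
  have e1 : l = (a ++ u) ++ x :: (v ++ c) := by simp [h1]
  have e2 : l = (a' ++ u) ++ x :: (v ++ c') := by simp [h2]
  have c1 : (a ++ u).count x = 0 := by
    have := hcount
    rw [e1] at this
    simp [List.count_append, List.count_cons] at this ⊢
    omega
  have c2 : (a' ++ u).count x = 0 := by
    have := hcount
    rw [e2] at this
    simp [List.count_append, List.count_cons] at this ⊢
    omega
  have n1 : x ∉ a ++ u := List.count_eq_zero.mp c1
  have n2 : x ∉ a' ++ u := List.count_eq_zero.mp c2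
  have p1 : ((a ++ u) ++ [x]) <+: l := ⟨v ++ c, by simp [e1]⟩
  have p2 : ((a' ++ u) ++ [x]) <+: l := ⟨v ++ c', by simp [e2]⟩
  have q1 : (a ++ u) <+: l := ⟨x :: (v ++ c), by simp [e1]⟩
  have q2 : (a' ++ u) <+: l := ⟨x :: (v ++ c'), by simp [e2]⟩
  have hlen : (a ++ u).length = (a' ++ u).length := by
    by_contra hne
    rcases Nat.lt_or_ge (a ++ u).length (a' ++ u).length with hlt | hge
    · have : ((a ++ u) ++ [x]) <+: (a' ++ u) :=
        List.prefix_of_prefix_length_le p1 q2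
          (by simp only [List.length_append, List.length_cons, List.length_nil] at hlt ⊢; omega)
      exact n2 (this.subset (by simp))
    · have hlt : (a' ++ u).length < (a ++ u).length := by omega
      have : ((a' ++ u) ++ [x]) <+: (a ++ u) :=
        List.prefix_of_prefix_length_le p2 q1
          (by simp only [List.length_append, List.length_cons, List.length_nil] at hlt ⊢; omega)
      exact n1 (this.subset (by simp))
  have ha : a = a' := by
    have : (a ++ u) = (a' ++ u) :=
      (List.prefix_of_prefix_length_le q1 q2 (le_of_eq hlen)).eq_of_length hlen
    exact List.append_cancel_right this
  subst ha
  refine ⟨rfl, ?_⟩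
  have := h1.symm.trans h2
  simpa using this

-- canonical occurrence with the count formula
lemma canon (S : FormalBracket) : ∀ b : FormalBracket, S.isSub b = true →
    ∃ pre suf : List Token, toWord b = pre ++ toWord S ++ suf ∧
      (FormalBracket.diffCount S b : ℤ)
        = (suf.countP (fun t => t = Token.rb) : ℤ)
          - (suf.countP (fun t => t = Token.lb) : ℤ) := by
  intro b
  induction b with
  | var j =>
    intro h
    simp [FormalBracket.isSub] at h
    subst h
    exact ⟨[], [], by simp, by simp [FormalBracket.diffCount]⟩
  | br b₁ b₂ ih₁ ih₂ =>
    intro h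
    by_cases hS : S = FormalBracket.br b₁ b₂
    · exact ⟨[], [], by simp [hS], by simp [hS, FormalBracket.diffCount]⟩
    · simp [FormalBracket.isSub, hS] at h
      by_cases h1 : S.isSub b₁ = true
      · obtain ⟨pre, suf, heq, hc⟩ := ih₁ h1
        refine ⟨[Token.lb] ++ pre, suf ++ [Token.comma] ++ toWord b₂ ++ [Token.rb], ?_, ?_⟩
        · simp [toWord, heq]
        · have hd : FormalBracket.diffCount S (FormalBracket.br b₁ b₂)
              = 1 + FormalBracket.diffCount S b₁ := by
            simp [FormalBracket.diffCount, hS, h1]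
          rw [hd]
          have hb := balance b₂
          push_cast
          simp [List.countP_append, hc]
          omega
      · have h2 : S.isSub b₂ = true := by tauto
        obtain ⟨pre, suf, heq, hc⟩ := ih₂ h2
        refine ⟨[Token.lb] ++ toWord b₁ ++ [Token.comma] ++ pre, suf ++ [Token.rb], ?_, ?_⟩
        · simp [toWord, heq]
        · have hd : FormalBracket.diffCount S (FormalBracket.br b₁ b₂)
              = 1 + FormalBracket.diffCount S b₂ := by
            simp [FormalBracket.diffCount, hS, h1]
          rw [hd]
          push_cast
          simp [List.countP_append, hc]
          omega


/-- If `S` is a subbracket of the formal iterated bracket `b` (whose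
variables are the consecutive distinct variables `X_{μ+1} … X_{μ+m}`), then `S` occurs as a
substring of the word of `b`, and for any such occurrence `toWord b = pre ++ toWord S ++ suf`,
the number of differentiations `𝔡(S; b)` equals the number of right parentheses occurring to
the right of `S` minus the number of left parentheses occurring to the right of `S`. -/
theorem diffCount_eq_right_minus_left_brackets (b S : FormalBracket)
    (hvalid : ∃ μ : ℕ, b.varsB = List.range' (μ + 1) b.lengthB)
    (hsub : S.isSub b = true) :
    (∃ pre suf : List Token, toWord b = pre ++ toWord S ++ suf) ∧
    (∀ pre suf : List Token, toWord b = pre ++ toWord S ++ suf →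
      (FormalBracket.diffCount S b : ℤ)
        = (suf.countP (fun t => t = Token.rb) : ℤ)
          - (suf.countP (fun t => t = Token.lb) : ℤ)) := by
  
  obtain ⟨μ, hv⟩ := hvalid
  have hnodup : b.varsB.Nodup := hv ▸ List.nodup_range' _ Nat.one_pos
  obtain ⟨pre₀, suf₀, heq₀, hc₀⟩ := canon S b hsub
  refine ⟨⟨pre₀, suf₀, heq₀⟩, ?_⟩
  intro pre suf h
  obtain ⟨j, hj⟩ := List.exists_mem_of_ne_nil S.varsB (vars_ne_nil S)
  have hx : Token.tvar j ∈ toWord S := (mem_toWord_tvar S j).mpr hj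
  have hcount : (toWord b).count (Token.tvar j) ≤ 1 := by
    rw [count_tvar]
    exact List.nodup_iff_count_le_one.mp hnodup j
  obtain ⟨hp, hs⟩ := unique_occ hx hcount heq₀ h
  rw [← hs]
  exact hc₀
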